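/- Let Σ be a finite signature, E a finite set of equations between ground Σ-terms, and C a finite subterm-closed set of ground Σ-terms such that every term occurring in an equation of E belongs to C. Then there exists a deterministic bottom-up tree automaton (Q, δ) over Σ (no accepting states needed), with one state per E-equivalence class of a term of C, such that for all ground terms s, t for which there exist s′, t′ ∈ C with E ⊢ s = s′ and E ⊢ t = t′: the values δ(s) and δ(t) are defined, and E ⊢ s = t holds if and only if δ(s) = δ(t). -/

import Mathlib

namespace SyGuS

/-- Terms over a ranked alphabet: symbols `F`, each of arity `ar f`. -/
inductive Tm (F : Type) (ar : F → ℕ) : Type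
  | app (f : F) (args : Fin (ar f) → Tm F ar) : Tm F ar

/-- Arity function on `F ⊕ Fin k`: the `k` extra symbols are constants
(the variables `x₁,…,x_k`, treated as constants). -/
abbrev varAr {F : Type} (ar : F → ℕ) (k : ℕ) : F ⊕ Fin k → ℕ := Sum.elim ar fun _ => 0

/-- Arity function on `F ⊕ Unit`: the extra symbol is the function symbol `f` of arity `k`. -/
abbrev fAr {F : Type} (ar : F → ℕ) (k : ℕ) : F ⊕ Unit → ℕ := Sum.elim ar fun _ => k

/-- A (nonempty) first-order structure for the ranked alphabet `(F, ar)`. -/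
structure Str (F : Type) (ar : F → ℕ) : Type 1 where
  D : Type
  [nonemptyD : Nonempty D]
  interp : (f : F) → (Fin (ar f) → D) → D

attribute [instance] Str.nonemptyD

/-- Evaluation of a ground term in a structure. -/
def Tm.eval {F : Type} {ar : F → ℕ} (M : Str F ar) : Tm F ar → M.D
  | .app f args => M.interp f fun i => (args i).eval M

/-- First-order substitution: replace the variables `x₁,…,x_k` by terms. -/
def Tm.instVars {F : Type} {ar : F → ℕ} {k : ℕ} (σ : Fin k → Tm F ar) :
    Tm (F ⊕ Fin k) (varAr ar k) → Tm F ar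
  | .app (Sum.inl g) args => .app g fun i => Tm.instVars σ (args i)
  | .app (Sum.inr i) _ => σ i

/-- Second-order substitution `·{w/f}`: replace every application `f(s₁,…,s_k)` of the
distinguished symbol `f` by `w{s₁/x₁,…,s_k/x_k}`. -/
def Tm.soSubst {F : Type} {ar : F → ℕ} {k : ℕ} (w : Tm (F ⊕ Fin k) (varAr ar k)) :
    Tm (F ⊕ Unit) (fAr ar k) → Tm F ar
  | .app (Sum.inl g) args => .app g fun i => Tm.soSubst w (args i)
  | .app (Sum.inr _) args => Tm.instVars (fun i => Tm.soSubst w (args i)) w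

/-- Renaming of symbols along an arity-preserving map. -/
def Tm.rename {F G : Type} {arF : F → ℕ} {arG : G → ℕ} (h : F → G)
    (hh : ∀ f, arG (h f) = arF f) : Tm F arF → Tm G arG
  | .app f args => .app (h f) fun i => (args (Fin.cast (hh f) i)).rename h hh

/-- Equational consequence: `E ⊢ s = t` iff every structure satisfying all
equations of `E` also satisfies `s = t`. -/
def EqCons {F : Type} {ar : F → ℕ} (E : Set (Tm F ar × Tm F ar)) (s t : Tm F ar) : Prop :=
  ∀ M : Str F ar, (∀ e ∈ E, Tm.eval M e.1 = Tm.eval M e.2) → s.eval M = t.eval M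

/-- The subterm relation on terms. -/
inductive Tm.Subterm {F : Type} {ar : F → ℕ} : Tm F ar → Tm F ar → Prop
  | refl (t : Tm F ar) : Tm.Subterm t t
  | step {s : Tm F ar} (f : F) (args : Fin (ar f) → Tm F ar) (i : Fin (ar f)) :
      Tm.Subterm s (args i) → Tm.Subterm s (.app f args)

/-- A set of terms is subterm-closed if it contains all subterms of its members. -/
def SubtermClosed {F : Type} {ar : F → ℕ} (C : Set (Tm F ar)) : Prop :=
  ∀ t ∈ C, ∀ s, Tm.Subterm s t → s ∈ C

/-- Deterministic bottom-up tree automaton with a partial transition function. -/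
structure DTA (F : Type) (ar : F → ℕ) : Type 1 where
  Q : Type
  [fintypeQ : Fintype Q]
  δ : (f : F) → (Fin (ar f) → Q) → Option Q
  final : Set Q

attribute [instance] DTA.fintypeQ

/-- Sequence a finite tuple of options. -/
def finSeq {Q : Type} : {n : ℕ} → (Fin n → Option Q) → Option (Fin n → Q)
  | 0, _ => some (fun i => i.elim0)
  | _ + 1, f => (f 0).bind fun q => (finSeq fun i => f i.succ).map (Fin.cons q)

/-- The (partial) run of the automaton on a term: `δ` extended to terms. -/
def DTA.run {F : Type} {ar : F → ℕ} (A : DTA F ar) : Tm F ar → Option A.Q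
  | .app f args => (finSeq fun i => A.run (args i)).bind fun qs => A.δ f qs

/-- The language accepted by the automaton. -/
def DTA.lang {F : Type} {ar : F → ℕ} (A : DTA F ar) : Set (Tm F ar) :=
  { t | ∃ q ∈ A.final, A.run t = some q }

/-- A tree language is regular if it is the language of some deterministic
bottom-up tree automaton. -/
def IsRegularTreeLang {F : Type} {ar : F → ℕ} (L : Set (Tm F ar)) : Prop :=
  ∃ A : DTA F ar, L = A.lang

section Aux

variable {F : Type} {ar : F → ℕ}

theorem eqCons_refl (E : Set (Tm F ar × Tm F ar)) (s : Tm F ar) : EqCons E s s :=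
  fun _ _ => rfl

theorem eqCons_symm {E : Set (Tm F ar × Tm F ar)} {s t : Tm F ar} (h : EqCons E s t) :
    EqCons E t s := fun M hM => (h M hM).symm

theorem eqCons_trans {E : Set (Tm F ar × Tm F ar)} {s t u : Tm F ar}
    (h1 : EqCons E s t) (h2 : EqCons E t u) : EqCons E s u :=
  fun M hM => (h1 M hM).trans (h2 M hM)

theorem eqCons_app {E : Set (Tm F ar × Tm F ar)} {f : F} {a b : Fin (ar f) → Tm F ar}
    (h : ∀ i, EqCons E (a i) (b i)) : EqCons E (.app f a) (.app f b) := by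
  intro M hM
  show M.interp f _ = M.interp f _
  congr 1
  funext i
  exact h i M hM

theorem finSeq_eq_some {Q : Type} : ∀ {n : ℕ} {f : Fin n → Option Q} {g : Fin n → Q},
    (∀ i, f i = some (g i)) → finSeq f = some g
  | 0, _, g, _ => by
    simp only [finSeq]
    congr 1
    funext i
    exact i.elim0
  | n + 1, f, g, h => by
    have ih : finSeq (fun i : Fin n => f i.succ) = some (fun i => g i.succ) :=
      finSeq_eq_some (fun i => h i.succ)
    simp only [finSeq, h 0, ih, Option.bind_some, Option.map_some]
    congr 1
    exact funext (Fin.cases rfl fun j => by simp [Fin.cons_succ])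

theorem finSeq_some {Q : Type} : ∀ {n : ℕ} {f : Fin n → Option Q} {g : Fin n → Q},
    finSeq f = some g → ∀ i, f i = some (g i)
  | 0, _, _, _, i => i.elim0
  | n + 1, f, g, h, i => by
    simp only [finSeq] at h
    rcases Option.bind_eq_some_iff.mp h with ⟨q, hq, hrest⟩
    rcases Option.map_eq_some_iff.mp hrest with ⟨h', hh', hcons⟩
    refine Fin.cases ?_ (fun j => ?_) i
    · rw [hq, ← hcons, Fin.cons_zero]
    · have := finSeq_some hh' j
      rw [this, ← hcons, Fin.cons_succ]

/-- The setoid of `E`-equivalence on a set of terms. -/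
def eqSetoid (E : Set (Tm F ar × Tm F ar)) (C : Set (Tm F ar)) : Setoid C :=
  ⟨fun a b => EqCons E a.1 b.1,
   ⟨fun a => eqCons_refl E a.1, eqCons_symm, eqCons_trans⟩⟩

open Classical in
/-- The transition function of the congruence automaton. -/
noncomputable def cDelta (E : Set (Tm F ar × Tm F ar)) (C : Set (Tm F ar)) (f : F)
    (qs : Fin (ar f) → Quotient (eqSetoid E C)) : Option (Quotient (eqSetoid E C)) :=
  if h : ∃ c : C, EqCons E c.1 (.app f fun i => ((qs i).out : C).1) then
    some (Quotient.mk (eqSetoid E C) h.choose)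
  else none

theorem cDelta_pos {E : Set (Tm F ar × Tm F ar)} {C : Set (Tm F ar)} {f : F}
    {qs : Fin (ar f) → Quotient (eqSetoid E C)}
    (h : ∃ c : C, EqCons E c.1 (.app f fun i => ((qs i).out : C).1)) :
    cDelta E C f qs = some (Quotient.mk (eqSetoid E C) h.choose) := by
  unfold cDelta
  rw [dif_pos h]

theorem cDelta_eq_some {E : Set (Tm F ar × Tm F ar)} {C : Set (Tm F ar)} {f : F}
    {qs : Fin (ar f) → Quotient (eqSetoid E C)} {q : Quotient (eqSetoid E C)}
    (h : cDelta E C f qs = some q) :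
    ∃ c : C, EqCons E c.1 (.app f fun i => ((qs i).out : C).1) ∧
      Quotient.mk (eqSetoid E C) c = q := by
  unfold cDelta at h
  by_cases hex : ∃ c : C, EqCons E c.1 (.app f fun i => ((qs i).out : C).1)
  · rw [dif_pos hex] at h
    exact ⟨hex.choose, hex.choose_spec, Option.some.inj h⟩
  · rw [dif_neg hex] at h
    exact absurd h (by simp)

/-- The congruence automaton: states are `E`-classes of terms of `C`. -/
noncomputable def cAut (E : Set (Tm F ar × Tm F ar)) (C : Set (Tm F ar)) (hC : C.Finite) :
    DTA F ar :=
  haveI := hC.to_subtype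
  { Q := Quotient (eqSetoid E C)
    fintypeQ := Fintype.ofFinite _
    δ := cDelta E C
    final := ∅ }

theorem cAut_out_equiv {E : Set (Tm F ar × Tm F ar)} {C : Set (Tm F ar)}
    (c : C) : EqCons E ((Quotient.mk (eqSetoid E C) c).out : C).1 c.1 :=
  Quotient.exact (s := eqSetoid E C) (Quotient.out_eq _)

/-- The run of the congruence automaton on a term of `C` is its own class. -/
theorem cAut_run_mem {E : Set (Tm F ar × Tm F ar)} {C : Set (Tm F ar)} {hC : C.Finite}
    (hclosed : SubtermClosed C) :
    ∀ t (ht : t ∈ C), (cAut E C hC).run t = some (Quotient.mk (eqSetoid E C) ⟨t, ht⟩) := by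
  intro t
  induction t with
  | app f args ih =>
    intro ht
    have hargs : ∀ i, args i ∈ C := fun i =>
      hclosed _ ht _ (Tm.Subterm.step f args i (Tm.Subterm.refl _))
    have hrun : ∀ i, (cAut E C hC).run (args i) =
        some (Quotient.mk (eqSetoid E C) ⟨args i, hargs i⟩) := fun i => ih i (hargs i)
    have hseq := finSeq_eq_some hrun
    show ((finSeq fun i => (cAut E C hC).run (args i)).bind fun qs => cDelta E C f qs) = _
    rw [hseq]; change cDelta E C f _ = _
    have hequiv : ∀ i, EqCons E
        ((Quotient.out (Quotient.mk (eqSetoid E C) ⟨args i, hargs i⟩) : C) : Tm F ar)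
        (args i) := fun i => cAut_out_equiv _
    have hex : ∃ c : C, EqCons E c.1
        (.app f fun i => (Quotient.out (Quotient.mk (eqSetoid E C) ⟨args i, hargs i⟩) : C).1) :=
      ⟨⟨Tm.app f args, ht⟩, eqCons_app fun i => eqCons_symm (hequiv i)⟩
    rw [cDelta_pos hex]
    congr 1
    refine Quotient.sound (s := eqSetoid E C) ?_
    exact eqCons_trans hex.choose_spec (eqCons_app fun i => hequiv i)

/-- Soundness: if the run yields a state, the term is `E`-equivalent to its
representative. -/
theorem cAut_run_sound {E : Set (Tm F ar × Tm F ar)} {C : Set (Tm F ar)} {hC : C.Finite} :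
    ∀ s (q : Quotient (eqSetoid E C)), (cAut E C hC).run s = some q →
      EqCons E s ((q.out : C) : Tm F ar) := by
  intro s
  induction s with
  | app f args ih =>
    intro q hq
    have hq' : ((finSeq fun i => (cAut E C hC).run (args i)).bind
        fun qs => cDelta E C f qs) = some q := hq
    rcases Option.bind_eq_some_iff.mp hq' with ⟨qs, hqs, hδ⟩
    have hrun : ∀ i, (cAut E C hC).run (args i) = some (qs i) := finSeq_some hqs
    have hargs : ∀ i, EqCons E (args i) (((qs i).out : C) : Tm F ar) :=
      fun i => ih i (qs i) (hrun i)
    rcases cDelta_eq_some hδ with ⟨c, hc, hcq⟩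
    have h1 : EqCons E (Tm.app f args) (c : C).1 :=
      eqCons_trans (eqCons_app hargs) (eqCons_symm hc)
    have h2 : EqCons E ((c : C) : Tm F ar) ((q.out : C) : Tm F ar) := by
      rw [← hcq]; exact eqCons_symm (cAut_out_equiv _)
    exact eqCons_trans h1 h2

/-- The structure whose domain is `Option Q`, derived from an automaton. -/
def autStr (A : DTA F ar) : Str F ar :=
  { D := Option A.Q
    nonemptyD := ⟨none⟩
    interp := fun f d => (finSeq d).bind fun qs => A.δ f qs }

theorem autStr_eval (A : DTA F ar) : ∀ t : Tm F ar, t.eval (autStr A) = A.run t := by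
  intro t
  induction t with
  | app f args ih =>
    show ((finSeq fun i => (args i).eval (autStr A)).bind fun qs => A.δ f qs) = _
    have : (fun i => (args i).eval (autStr A)) = fun i => A.run (args i) := funext ih
    rw [this]
    rfl

/-- Completeness: any term `E`-equivalent to a term of `C` runs to that term's class. -/
theorem cAut_run_complete {E : Set (Tm F ar × Tm F ar)} {C : Set (Tm F ar)} {hC : C.Finite}
    (hclosed : SubtermClosed C) (hEC : ∀ e ∈ E, e.1 ∈ C ∧ e.2 ∈ C)
    {s s' : Tm F ar} (hs' : s' ∈ C) (h : EqCons E s s') :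
    (cAut E C hC).run s = some (Quotient.mk (eqSetoid E C) ⟨s', hs'⟩) := by
  have hmodel : ∀ e ∈ E, e.1.eval (autStr (cAut E C hC)) = e.2.eval (autStr (cAut E C hC)) := by
    intro e he
    rw [autStr_eval, autStr_eval,
      cAut_run_mem hclosed e.1 (hEC e he).1, cAut_run_mem hclosed e.2 (hEC e he).2]
    congr 1
    exact Quotient.sound (s := eqSetoid E C) (fun M hM => hM e he)
  have := h (autStr (cAut E C hC)) hmodel
  rw [autStr_eval, autStr_eval, cAut_run_mem hclosed s' hs'] at this
  exact this

end Aux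

/-- **Theorem `aut_thm`.**  Let `E` be a finite set of ground equations over
the finite signature `Σ = (F, ar)`, and `C` a finite subterm-closed set of ground terms
containing all terms occurring in `E`.  Then there is a deterministic bottom-up tree
automaton `(Q, δ)` (no accepting states needed) whose states are exactly the
`E`-equivalence classes of the terms of `C`: every state is reached by some term of `C`,
and for all ground terms `s, t` that are `E`-equivalent to some terms `s', t' ∈ C`,
`δ(s)` and `δ(t)` are defined and `E ⊢ s = t` holds iff `δ(s) = δ(t)`. -/
theorem exists_congruence_automaton {F : Type} [Fintype F] (ar : F → ℕ)
    (E : Set (Tm F ar × Tm F ar)) (hE : E.Finite)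
    (C : Set (Tm F ar)) (hC : C.Finite) (hclosed : SubtermClosed C)
    (hEC : ∀ e ∈ E, e.1 ∈ C ∧ e.2 ∈ C) :
    ∃ A : DTA F ar,
      (∀ q : A.Q, ∃ s ∈ C, A.run s = some q) ∧
      ∀ s t : Tm F ar,
        (∃ s' ∈ C, EqCons E s s') → (∃ t' ∈ C, EqCons E t t') →
          (A.run s).isSome ∧ (A.run t).isSome ∧ (EqCons E s t ↔ A.run s = A.run t) := by
  classical
  refine ⟨cAut E C hC, ?_, ?_⟩
  · intro q
    obtain ⟨c, hc⟩ := Quotient.exists_rep q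
    exact ⟨c.1, c.2, by rw [cAut_run_mem hclosed c.1 c.2, ← hc]; rfl⟩
  · rintro s t ⟨s', hs'C, hs'⟩ ⟨t', ht'C, ht'⟩
    have hruns := cAut_run_complete (hC := hC) hclosed hEC hs'C hs'
    have hrunt := cAut_run_complete (hC := hC) hclosed hEC ht'C ht'
    refine ⟨by rw [hruns]; rfl, by rw [hrunt]; rfl, ?_, ?_⟩
    · intro hst
      rw [hruns, hrunt]
      congr 1
      exact Quotient.sound (s := eqSetoid E C)
        (eqCons_trans (eqCons_symm hs') (eqCons_trans hst ht'))
    · intro hrun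
      rw [hruns, hrunt] at hrun
      have := Quotient.exact (s := eqSetoid E C) (Option.some.inj hrun)
      exact eqCons_trans hs' (eqCons_trans this (eqCons_symm ht'))

end SyGuS
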